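/- Let μ be a finite Borel measure on R^{n+1} supported in a ball B_{2R₀}, and suppose there is a constant c such that μ(B_r) ≤ c·rⁿ for all r ∈ [2ε, 2R₀] and μ(B_{2ε}) ≤ (4ε)ⁿ ω_n (Q+1), where 0 < ε ≤ R₀ and Q ≥ 1. Then for every s ∈ (0, R₀²] and R ∈ [ε, R₀], ∫ (4π(s+R²))^{-n/2} exp(-|x|²/(4(s+R²))) dμ(x) ≤ C, where C depends only on n, c, Q, R₀, and μ(B_{2R₀}) (but not on ε, s, R). Specifically, using the layer-cake formula, ∫_0^1 μ({x : exp(-|x|²/(4(s+R²))) ≥ λ}) dλ ≤ e^{-R₀²/(s+R²)} μ(B_{2R₀}) + c(4(s+R²))^{n/2} ∫_0^1 (log(1/λ))^{n/2} dλ + (4ε)ⁿ ω_n (Q+1). -/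

import Mathlib

open MeasureTheory Metric

/-- `ω_n`, the volume of the unit ball in `ℝⁿ`. -/
noncomputable def omegaN (n : ℕ) : ℝ :=
  (volume (ball (0 : EuclideanSpace ℝ (Fin n)) 1)).toReal

lemma aux_log_one_div_nonneg {l : ℝ} (h0 : 0 ≤ l) (h1 : l ≤ 1) : 0 ≤ Real.log (1/l) := by
  rcases eq_or_lt_of_le h0 with h | h
  · simp [← h]
  · exact Real.log_nonneg ((le_div_iff₀ h).mpr (by linarith))

lemma aux_logpow_le (n : ℕ) (hn : 1 ≤ n) {l : ℝ} (hl : 0 < l) (hl1 : l ≤ 1) :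
    (Real.log (1/l)) ^ ((n:ℝ)/2) ≤ (n:ℝ)^((n:ℝ)/2) * l ^ (-(1:ℝ)/2) := by
  have hn0 : (0:ℝ) < n := by exact_mod_cast Nat.pos_of_ne_zero (by omega)
  have hinv : (0:ℝ) < 1/l := by positivity
  have h3 : Real.log (1/l) ≤ (n:ℝ) * (1/l) ^ ((1:ℝ)/n) := by
    have h1 : Real.log (1/l) = (n:ℝ) * Real.log ((1/l) ^ ((1:ℝ)/(n:ℝ))) := by
      rw [Real.log_rpow hinv]; field_simp
    have h2 : Real.log ((1/l) ^ ((1:ℝ)/(n:ℝ))) ≤ (1/l) ^ ((1:ℝ)/(n:ℝ)) := by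
      have := Real.log_le_sub_one_of_pos (Real.rpow_pos_of_pos hinv ((1:ℝ)/(n:ℝ)))
      linarith
    rw [h1]
    exact mul_le_mul_of_nonneg_left h2 hn0.le
  have h4 := Real.rpow_le_rpow (aux_log_one_div_nonneg hl.le hl1) h3
    (by positivity : (0:ℝ) ≤ (n:ℝ)/2)
  rw [Real.mul_rpow hn0.le (by positivity)] at h4
  have h5 : ((1/l) ^ ((1:ℝ)/(n:ℝ))) ^ ((n:ℝ)/2) = l ^ (-(1:ℝ)/2) := by
    rw [← Real.rpow_mul hinv.le]
    have : (1:ℝ)/(n:ℝ) * ((n:ℝ)/2) = 1/2 := by field_simp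
    rw [this, one_div, Real.inv_rpow hl.le, ← Real.rpow_neg hl.le]
    norm_num
  rwa [h5] at h4

lemma aux_exp_neg_le_pow (n : ℕ) (hn : 1 ≤ n) {x : ℝ} (hx : 0 < x) :
    Real.exp (-x) ≤ (n:ℝ)^n / x^n := by
  have hn0 : (0:ℝ) < n := by exact_mod_cast Nat.pos_of_ne_zero (by omega)
  have h1 : x / n ≤ Real.exp (x / n) := by
    have := Real.add_one_le_exp (x / n); linarith
  have h2 : (x/n)^n ≤ Real.exp x := by
    calc (x/n)^n ≤ (Real.exp (x/n))^n := pow_le_pow_left₀ (by positivity) h1 n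
    _ = Real.exp x := by rw [← Real.exp_nat_mul]; congr 1; field_simp
  have hxn : 0 < (x/(n:ℝ))^n := by positivity
  rw [Real.exp_neg]
  calc (Real.exp x)⁻¹ ≤ ((x/(n:ℝ))^n)⁻¹ := inv_anti₀ hxn h2
  _ = (n:ℝ)^n / x^n := by rw [div_pow, inv_div]

lemma aux_logpow_intInt (n : ℕ) (hn : 1 ≤ n) :
    IntervalIntegrable (fun l : ℝ => (Real.log (1/l)) ^ ((n:ℝ)/2)) volume 0 1 := by
  have hdom : IntervalIntegrable (fun l : ℝ => (n:ℝ)^((n:ℝ)/2) * l ^ (-(1:ℝ)/2)) volume 0 1 :=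
    (intervalIntegral.intervalIntegrable_rpow' (by norm_num)).const_mul _
  apply hdom.mono_fun'
  · exact ((Real.continuous_rpow_const (by positivity : (0:ℝ) ≤ (n:ℝ)/2)).measurable.comp
      (Real.measurable_log.comp (measurable_one.div measurable_id))).aestronglyMeasurable
  · rw [Set.uIoc_of_le (zero_le_one' ℝ)]
    filter_upwards [ae_restrict_mem measurableSet_Ioc] with l hl
    rw [Real.norm_eq_abs, abs_of_nonneg (Real.rpow_nonneg (aux_log_one_div_nonneg hl.1.le hl.2) _)]
    exact aux_logpow_le n hn hl.1 hl.2

lemma aux_superlevel (m : ℕ) {τ l : ℝ} (hτ : 0 < τ) (hl : 0 < l) (hl1 : l ≤ 1) :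
    {x : EuclideanSpace ℝ (Fin m) | l ≤ Real.exp (-‖x‖ ^ 2 / (4 * τ))} =
      closedBall 0 (Real.sqrt (4 * τ * Real.log (1/l))) := by
  have h4τ : (0:ℝ) < 4 * τ := by linarith
  have hL : 0 ≤ Real.log (1/l) := aux_log_one_div_nonneg hl.le hl1
  ext x
  simp only [Set.mem_setOf_eq, mem_closedBall, dist_zero_right]
  rw [Real.le_sqrt (norm_nonneg x) (by positivity), ← Real.log_le_iff_le_exp hl,
    neg_div, le_neg, div_le_iff₀ h4τ, one_div, Real.log_inv, mul_comm (4*τ)]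

/-- Uniform Gaussian density ratio bound. -/
theorem stmt16 (n : ℕ) (hn : 1 ≤ n) (c Q R₀ Mtot : ℝ)
    (hc : 0 ≤ c) (hQ : 1 ≤ Q) (hR₀ : 0 < R₀) (hMtot : 0 ≤ Mtot) :
    ∃ C : ℝ, ∀ (μ : Measure (EuclideanSpace ℝ (Fin (n+1)))) (ε s R : ℝ),
      IsFiniteMeasure μ →
      0 < ε → ε ≤ R₀ →
      μ (closedBall (0 : EuclideanSpace ℝ (Fin (n+1))) (2 * R₀))ᶜ = 0 →
      (μ Set.univ).toReal ≤ Mtot →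
      (∀ r : ℝ, 2 * ε ≤ r → r ≤ 2 * R₀ →
        (μ (closedBall (0 : EuclideanSpace ℝ (Fin (n+1))) r)).toReal ≤ c * r ^ n) →
      (μ (closedBall (0 : EuclideanSpace ℝ (Fin (n+1))) (2 * ε))).toReal ≤
        (4 * ε) ^ n * omegaN n * (Q + 1) →
      0 < s → s ≤ R₀ ^ 2 → ε ≤ R → R ≤ R₀ →
      ((∫ x, (4 * Real.pi * (s + R ^ 2)) ^ (-(n:ℝ)/2)
          * Real.exp (-‖x‖ ^ 2 / (4 * (s + R ^ 2))) ∂μ) ≤ C) ∧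
      ((∫ l in (0:ℝ)..1,
          (μ {x | l ≤ Real.exp (-‖x‖ ^ 2 / (4 * (s + R ^ 2)))}).toReal) ≤
        Real.exp (-R₀ ^ 2 / (s + R ^ 2)) *
            (μ (closedBall (0 : EuclideanSpace ℝ (Fin (n+1))) (2 * R₀))).toReal
          + c * (4 * (s + R ^ 2)) ^ ((n:ℝ)/2) *
              (∫ l in (0:ℝ)..1, (Real.log (1/l)) ^ ((n:ℝ)/2))
          + (4 * ε) ^ n * omegaN n * (Q + 1)) := by
  refine ⟨(4*Real.pi)^(-(n:ℝ)/2) * ((n:ℝ)^n * 2^n / R₀^n) * Mtot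
      + c * Real.pi^(-(n:ℝ)/2) * (∫ l in (0:ℝ)..1, (Real.log (1/l)) ^ ((n:ℝ)/2))
      + (4*Real.pi)^(-(n:ℝ)/2) * (4^n * (omegaN n * (Q+1))), ?_⟩
  intro μ ε s R hfin hε hεR₀ hsupp hMt hgrow hsmall hs hsR₀ hεR hRR₀
  have hπ : (0:ℝ) < Real.pi := Real.pi_pos
  have hR : 0 < R := lt_of_lt_of_le hε hεR
  have hτ : 0 < s + R^2 := by positivity
  have hτε : ε^2 ≤ s + R^2 := by nlinarith
  have hτub : s + R^2 ≤ (2*R₀)^2 := by nlinarith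
  have hω0 : 0 ≤ omegaN n := ENNReal.toReal_nonneg
  set g : EuclideanSpace ℝ (Fin (n+1)) → ℝ :=
    fun x => Real.exp (-‖x‖ ^ 2 / (4 * (s + R ^ 2))) with hg
  set F : ℝ → ℝ := fun l => (μ {x | l ≤ g x}).toReal with hF
  set a : ℝ := Real.exp (-R₀ ^ 2 / (s + R ^ 2)) with ha
  set M' : ℝ := (μ (closedBall (0 : EuclideanSpace ℝ (Fin (n+1))) (2 * R₀))).toReal with hM'
  set I : ℝ := ∫ l in (0:ℝ)..1, (Real.log (1/l)) ^ ((n:ℝ)/2) with hI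
  set K3 : ℝ := (4 * ε) ^ n * omegaN n * (Q + 1) with hK3
  set f₂ : ℝ → ℝ :=
    fun l => c * (4 * (s + R^2)) ^ ((n:ℝ)/2) * (Real.log (1/l)) ^ ((n:ℝ)/2) with hf₂
  set K : ℝ := (4 * Real.pi * (s + R ^ 2)) ^ (-(n:ℝ)/2) with hKdef
  -- basic facts
  have hsup : ∀ l : ℝ, 0 < l → l ≤ 1 → {x : EuclideanSpace ℝ (Fin (n+1)) | l ≤ g x}
      = closedBall 0 (Real.sqrt (4 * (s + R^2) * Real.log (1/l))) :=
    fun l hl hl1 => aux_superlevel (n+1) hτ hl hl1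
  have hFanti : Antitone F := by
    intro l1 l2 h
    exact ENNReal.toReal_mono (measure_ne_top μ _) (measure_mono (fun x hx => le_trans h hx))
  have hFint : ∀ p q : ℝ, IntervalIntegrable F volume p q :=
    fun p q => hFanti.intervalIntegrable
  have ha0 : 0 < a := Real.exp_pos _
  have ha1 : a ≤ 1 := Real.exp_le_one_iff.mpr
    (by rw [neg_div, neg_nonpos]; positivity)
  have hμuniv : μ Set.univ
      = μ (closedBall (0 : EuclideanSpace ℝ (Fin (n+1))) (2*R₀)) := by
    refine le_antisymm ?_ (measure_mono (Set.subset_univ _))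
    calc μ Set.univ
        = μ (closedBall (0 : EuclideanSpace ℝ (Fin (n+1))) (2*R₀)
            ∪ (closedBall (0 : EuclideanSpace ℝ (Fin (n+1))) (2*R₀))ᶜ) := by
          rw [Set.union_compl_self]
    _ ≤ μ (closedBall (0 : EuclideanSpace ℝ (Fin (n+1))) (2*R₀))
        + μ ((closedBall (0 : EuclideanSpace ℝ (Fin (n+1))) (2*R₀))ᶜ) := measure_union_le _ _
    _ = μ (closedBall (0 : EuclideanSpace ℝ (Fin (n+1))) (2*R₀)) := by rw [hsupp, add_zero]
  have hM'Mtot : M' ≤ Mtot := by rw [hM', ← hμuniv]; exact hMt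
  have hFle : ∀ l, F l ≤ M' := by
    intro l
    rw [hM', ← hμuniv]
    exact ENNReal.toReal_mono (measure_ne_top μ _) (measure_mono (Set.subset_univ _))
  have hf2int : IntervalIntegrable f₂ volume 0 1 := (aux_logpow_intInt n hn).const_mul _
  have hf2nonneg : ∀ l ∈ Set.Icc (0:ℝ) 1, 0 ≤ f₂ l := fun l hl =>
    mul_nonneg (mul_nonneg hc (Real.rpow_nonneg (by positivity) _))
      (Real.rpow_nonneg (aux_log_one_div_nonneg hl.1 hl.2) _)
  have hK3nonneg : 0 ≤ K3 :=
    mul_nonneg (mul_nonneg (by positivity) hω0) (by linarith)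
  -- pointwise bound on [a,1]
  have hpt : ∀ l ∈ Set.Icc a 1, F l ≤ f₂ l + K3 := by
    intro l hl
    have hl0 : 0 < l := lt_of_lt_of_le ha0 hl.1
    have hL0 : 0 ≤ Real.log (1/l) := aux_log_one_div_nonneg hl0.le hl.2
    have hLub : Real.log (1/l) ≤ R₀^2/(s+R^2) := by
      have h1 : 1/l ≤ 1/a := one_div_le_one_div_of_le ha0 hl.1
      have h2 : Real.log (1/l) ≤ Real.log (1/a) := Real.log_le_log (by positivity) h1
      have h3 : Real.log (1/a) = R₀^2/(s+R^2) := by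
        rw [ha, one_div, Real.log_inv, Real.log_exp, neg_div, neg_neg]
      linarith
    have hr2R₀ : Real.sqrt (4*(s+R^2)*Real.log (1/l)) ≤ 2*R₀ := by
      have h1 : 4*(s+R^2)*Real.log (1/l) ≤ (2*R₀)^2 := by
        have hm := mul_le_mul_of_nonneg_left hLub (by linarith : (0:ℝ) ≤ 4*(s+R^2))
        have heq : 4*(s+R^2)*(R₀^2/(s+R^2)) = (2*R₀)^2 := by field_simp; ring
        linarith
      calc Real.sqrt (4*(s+R^2)*Real.log (1/l)) ≤ Real.sqrt ((2*R₀)^2) := Real.sqrt_le_sqrt h1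
      _ = 2*R₀ := Real.sqrt_sq (by linarith)
    have hFeq : F l = (μ (closedBall (0:EuclideanSpace ℝ (Fin (n+1)))
        (Real.sqrt (4*(s+R^2)*Real.log (1/l))))).toReal := by
      rw [hF]
      simp only
      rw [hsup l hl0 hl.2]
    by_cases hcase : 2*ε ≤ Real.sqrt (4*(s+R^2)*Real.log (1/l))
    · have hgrowth := hgrow _ hcase hr2R₀
      have hrn : (Real.sqrt (4*(s+R^2)*Real.log (1/l)))^n
          = (4*(s+R^2)) ^ ((n:ℝ)/2) * (Real.log (1/l)) ^ ((n:ℝ)/2) := by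
        rw [Real.sqrt_eq_rpow,
          ← Real.rpow_natCast ((4*(s+R^2)*Real.log (1/l)) ^ ((1:ℝ)/2)) n,
          ← Real.rpow_mul (by positivity),
          show (1/(2:ℝ))*(n:ℝ) = (n:ℝ)/2 by ring,
          Real.mul_rpow (by positivity) hL0]
      rw [hFeq]
      calc (μ (closedBall (0:EuclideanSpace ℝ (Fin (n+1)))
            (Real.sqrt (4*(s+R^2)*Real.log (1/l))))).toReal
          ≤ c * (Real.sqrt (4*(s+R^2)*Real.log (1/l)))^n := hgrowth
      _ = f₂ l := by rw [hf₂]; simp only; rw [hrn]; ring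
      _ ≤ f₂ l + K3 := le_add_of_nonneg_right hK3nonneg
    · push_neg at hcase
      rw [hFeq]
      calc (μ (closedBall (0:EuclideanSpace ℝ (Fin (n+1)))
            (Real.sqrt (4*(s+R^2)*Real.log (1/l))))).toReal
          ≤ (μ (closedBall (0:EuclideanSpace ℝ (Fin (n+1))) (2*ε))).toReal :=
            ENNReal.toReal_mono (measure_ne_top μ _)
              (measure_mono (closedBall_subset_closedBall hcase.le))
      _ ≤ K3 := hsmall
      _ ≤ f₂ l + K3 := le_add_of_nonneg_left (hf2nonneg l ⟨hl0.le, hl.2⟩)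
  -- key layer-cake estimate
  have key : (∫ l in (0:ℝ)..1, F l)
      ≤ a * M' + (c * (4*(s+R^2)) ^ ((n:ℝ)/2) * I + K3) := by
    rw [← intervalIntegral.integral_add_adjacent_intervals (hFint 0 a) (hFint a 1)]
    have hb1 : (∫ l in (0:ℝ)..a, F l) ≤ a * M' := by
      calc (∫ l in (0:ℝ)..a, F l) ≤ ∫ x in (0:ℝ)..a, M' := by
            exact intervalIntegral.integral_mono_on ha0.le (hFint 0 a)
              intervalIntegrable_const (fun x _ => hFle x)
      _ = a * M' := by simp
    have hf2int0a : IntervalIntegrable f₂ volume 0 a :=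
      hf2int.mono_set' (by
        rw [Set.uIoc_of_le ha0.le, Set.uIoc_of_le (zero_le_one' ℝ)]
        exact Set.Ioc_subset_Ioc le_rfl ha1)
    have hf2int' : IntervalIntegrable f₂ volume a 1 :=
      hf2int.mono_set' (by
        rw [Set.uIoc_of_le ha1, Set.uIoc_of_le (zero_le_one' ℝ)]
        exact Set.Ioc_subset_Ioc ha0.le le_rfl)
    have hb2 : (∫ l in a..1, F l) ≤ c * (4*(s+R^2)) ^ ((n:ℝ)/2) * I + K3 := by
      have hIeq : (∫ l in (0:ℝ)..1, f₂ l) = c * (4*(s+R^2)) ^ ((n:ℝ)/2) * I := by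
        rw [hI, hf₂]
        exact intervalIntegral.integral_const_mul _ _
      calc (∫ l in a..1, F l) ≤ ∫ l in a..1, (f₂ l + K3) :=
          intervalIntegral.integral_mono_on ha1 (hFint a 1)
            (hf2int'.add intervalIntegrable_const) hpt
      _ = (∫ l in a..1, f₂ l) + (1 - a) * K3 := by
          rw [intervalIntegral.integral_add hf2int' intervalIntegrable_const,
            intervalIntegral.integral_const, smul_eq_mul]
      _ ≤ (∫ l in (0:ℝ)..1, f₂ l) + K3 := by
          have h1 : (∫ l in a..1, f₂ l) ≤ ∫ l in (0:ℝ)..1, f₂ l := by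
            rw [← intervalIntegral.integral_add_adjacent_intervals hf2int0a hf2int']
            have h0a : 0 ≤ ∫ l in (0:ℝ)..a, f₂ l :=
              intervalIntegral.integral_nonneg ha0.le
                (fun u hu => hf2nonneg u ⟨hu.1, le_trans hu.2 ha1⟩)
            linarith
          nlinarith
      _ = c * (4*(s+R^2)) ^ ((n:ℝ)/2) * I + K3 := by rw [hIeq]
    linarith
  -- part 2
  have hpart2 : (∫ l in (0:ℝ)..1,
      (μ {x | l ≤ Real.exp (-‖x‖ ^ 2 / (4 * (s + R ^ 2)))}).toReal)
      ≤ a * M' + c * (4 * (s + R ^ 2)) ^ ((n:ℝ)/2) * I + K3 := by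
    calc (∫ l in (0:ℝ)..1,
        (μ {x | l ≤ Real.exp (-‖x‖ ^ 2 / (4 * (s + R ^ 2)))}).toReal)
        = ∫ l in (0:ℝ)..1, F l := rfl
    _ ≤ a * M' + (c * (4*(s+R^2)) ^ ((n:ℝ)/2) * I + K3) := key
    _ = a * M' + c * (4 * (s + R ^ 2)) ^ ((n:ℝ)/2) * I + K3 := by ring
  refine ⟨?_, hpart2⟩
  -- part 1
  have hgcont : Continuous g := by
    rw [hg]
    exact Real.continuous_exp.comp (((continuous_norm.pow 2).neg).div_const _)
  have hg0 : ∀ x, 0 ≤ g x := fun x => (Real.exp_pos _).le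
  have hgle1 : ∀ x, g x ≤ 1 := fun x => Real.exp_le_one_iff.mpr
    (div_nonpos_of_nonpos_of_nonneg (neg_nonpos.mpr (by positivity)) (by linarith))
  have hgint : Integrable g μ := by
    refine (integrable_const (1:ℝ)).mono' hgcont.aestronglyMeasurable
      (Filter.Eventually.of_forall fun x => ?_)
    rw [Real.norm_eq_abs, abs_of_nonneg (hg0 x)]
    exact hgle1 x
  have hlayer : (∫ x, g x ∂μ) = ∫ l in (0:ℝ)..1, F l := by
    rw [hgint.integral_eq_integral_Ioc_meas_le (Filter.Eventually.of_forall hg0)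
      (Filter.Eventually.of_forall hgle1)]
    rw [intervalIntegral.integral_of_le (zero_le_one' ℝ)]
    rfl
  have hK0 : 0 ≤ K := Real.rpow_nonneg (by positivity) _
  have hP : (0:ℝ) ≤ (4*Real.pi)^(-(n:ℝ)/2) := Real.rpow_nonneg (by positivity) _
  have hKsplit : K = (4*Real.pi)^(-(n:ℝ)/2) * (s+R^2)^(-(n:ℝ)/2) := by
    rw [hKdef, Real.mul_rpow (by positivity) hτ.le]
  -- bound K * a * M'
  have haub : a ≤ (n:ℝ)^n * (s+R^2)^n / R₀^(2*n) := by
    have hax := aux_exp_neg_le_pow n hn (x := R₀^2/(s+R^2)) (by positivity)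
    have haeq : a = Real.exp (-(R₀^2/(s+R^2))) := by rw [ha, neg_div]
    have heq : (n:ℝ)^n / (R₀^2/(s+R^2))^n = (n:ℝ)^n * (s+R^2)^n / R₀^(2*n) := by
      rw [div_pow, div_div_eq_mul_div, ← pow_mul]
    rw [haeq]
    rw [heq] at hax
    exact hax
  have h1 : (s+R^2)^(-(n:ℝ)/2) * (s+R^2)^(n:ℕ) = (s+R^2)^((n:ℝ)/2) := by
    rw [← Real.rpow_natCast (s+R^2) n, ← Real.rpow_add hτ]
    congr 1
    ring
  have h2 : (s+R^2)^((n:ℝ)/2) ≤ 2^n * R₀^n := by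
    calc (s+R^2)^((n:ℝ)/2) ≤ ((2*R₀)^2)^((n:ℝ)/2) :=
      Real.rpow_le_rpow hτ.le hτub (by positivity)
    _ = (2*R₀)^n := by
      rw [← Real.rpow_natCast (2*R₀) 2, ← Real.rpow_mul (by positivity),
        show ((2:ℕ):ℝ)*((n:ℝ)/2) = (n:ℝ) by push_cast; ring, Real.rpow_natCast]
    _ = 2^n * R₀^n := mul_pow 2 R₀ n
  have hτn : 0 ≤ (s+R^2)^(-(n:ℝ)/2) := Real.rpow_nonneg hτ.le _
  have hstep : (s+R^2)^(-(n:ℝ)/2) * a ≤ (n:ℝ)^n * 2^n / R₀^n := by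
    calc (s+R^2)^(-(n:ℝ)/2) * a
        ≤ (s+R^2)^(-(n:ℝ)/2) * ((n:ℝ)^n * (s+R^2)^n / R₀^(2*n)) :=
          mul_le_mul_of_nonneg_left haub hτn
    _ = ((s+R^2)^(-(n:ℝ)/2) * (s+R^2)^(n:ℕ)) * ((n:ℝ)^n / R₀^(2*n)) := by ring
    _ = (s+R^2)^((n:ℝ)/2) * ((n:ℝ)^n / R₀^(2*n)) := by rw [h1]
    _ ≤ (2^n * R₀^n) * ((n:ℝ)^n / R₀^(2*n)) :=
          mul_le_mul_of_nonneg_right h2 (by positivity)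
    _ = (n:ℝ)^n * 2^n / R₀^n := by
          rw [two_mul, pow_add]
          field_simp
  have hKaM : K * a * M' ≤ (4*Real.pi)^(-(n:ℝ)/2) * ((n:ℝ)^n * 2^n / R₀^n) * Mtot := by
    have hstep2 : K * a ≤ (4*Real.pi)^(-(n:ℝ)/2) * ((n:ℝ)^n * 2^n / R₀^n) := by
      calc K * a = (4*Real.pi)^(-(n:ℝ)/2) * ((s+R^2)^(-(n:ℝ)/2) * a) := by
            rw [hKsplit]; ring
      _ ≤ (4*Real.pi)^(-(n:ℝ)/2) * ((n:ℝ)^n * 2^n / R₀^n) :=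
            mul_le_mul_of_nonneg_left hstep hP
    have hM'0 : 0 ≤ M' := ENNReal.toReal_nonneg
    have hKa0 : 0 ≤ K * a := mul_nonneg hK0 ha0.le
    calc K * a * M' ≤ ((4*Real.pi)^(-(n:ℝ)/2) * ((n:ℝ)^n * 2^n / R₀^n)) * M' :=
          mul_le_mul_of_nonneg_right hstep2 hM'0
    _ ≤ ((4*Real.pi)^(-(n:ℝ)/2) * ((n:ℝ)^n * 2^n / R₀^n)) * Mtot := by
          refine mul_le_mul_of_nonneg_left hM'Mtot ?_
          positivity
  -- middle term
  have hmid : K * (c * (4*(s+R^2)) ^ ((n:ℝ)/2) * I) = c * Real.pi^(-(n:ℝ)/2) * I := by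
    have h4τ : (0:ℝ) < 4*(s+R^2) := by linarith
    have hKsplit2 : K = Real.pi^(-(n:ℝ)/2) * (4*(s+R^2))^(-(n:ℝ)/2) := by
      rw [hKdef, show 4*Real.pi*(s+R^2) = Real.pi * (4*(s+R^2)) by ring,
        Real.mul_rpow Real.pi_pos.le h4τ.le]
    have hcancel : (4*(s+R^2))^(-(n:ℝ)/2) * (4*(s+R^2)) ^ ((n:ℝ)/2) = 1 := by
      rw [← Real.rpow_add h4τ, show -(n:ℝ)/2 + (n:ℝ)/2 = 0 by ring, Real.rpow_zero]
    calc K * (c * (4*(s+R^2)) ^ ((n:ℝ)/2) * I)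
        = c * Real.pi^(-(n:ℝ)/2) * I
          * ((4*(s+R^2))^(-(n:ℝ)/2) * (4*(s+R^2)) ^ ((n:ℝ)/2)) := by
          rw [hKsplit2]; ring
    _ = c * Real.pi^(-(n:ℝ)/2) * I := by rw [hcancel, mul_one]
  -- last term
  have hK3b : K * K3 ≤ (4*Real.pi)^(-(n:ℝ)/2) * (4^n * (omegaN n * (Q+1))) := by
    have hτe : (s+R^2)^(-(n:ℝ)/2) ≤ (ε^2)^(-(n:ℝ)/2) :=
      Real.rpow_le_rpow_of_nonpos (by positivity) hτε
        (by rw [neg_div]; exact neg_nonpos.mpr (by positivity))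
    have hε2 : (ε^2)^(-(n:ℝ)/2) = (ε^n)⁻¹ := by
      rw [← Real.rpow_natCast ε 2, ← Real.rpow_mul hε.le,
        show ((2:ℕ):ℝ)*(-(n:ℝ)/2) = -(n:ℝ) by push_cast; ring, Real.rpow_neg hε.le, Real.rpow_natCast]
    have hτe' : (s+R^2)^(-(n:ℝ)/2) ≤ (ε^n)⁻¹ := hε2 ▸ hτe
    have hh : (s+R^2)^(-(n:ℝ)/2) * (4*ε)^n ≤ 4^n := by
      rw [mul_pow]
      calc (s+R^2)^(-(n:ℝ)/2) * ((4:ℝ)^n * ε^n)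
          ≤ (ε^n)⁻¹ * ((4:ℝ)^n * ε^n) :=
            mul_le_mul_of_nonneg_right hτe' (by positivity)
      _ = 4^n := by field_simp
    have hω1 : 0 ≤ omegaN n * (Q+1) := mul_nonneg hω0 (by linarith)
    calc K * K3
        = ((4*Real.pi)^(-(n:ℝ)/2) * ((s+R^2)^(-(n:ℝ)/2) * (4*ε)^n)) * (omegaN n * (Q+1)) := by
          rw [hKsplit, hK3]; ring
    _ ≤ ((4*Real.pi)^(-(n:ℝ)/2) * 4^n) * (omegaN n * (Q+1)) :=
          mul_le_mul_of_nonneg_right (mul_le_mul_of_nonneg_left hh hP) hω1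
    _ = (4*Real.pi)^(-(n:ℝ)/2) * (4^n * (omegaN n * (Q+1))) := by ring
  -- assemble part 1
  calc (∫ x, (4 * Real.pi * (s + R ^ 2)) ^ (-(n:ℝ)/2)
        * Real.exp (-‖x‖ ^ 2 / (4 * (s + R ^ 2))) ∂μ)
      = K * ∫ x, g x ∂μ := integral_const_mul K g
  _ = K * ∫ l in (0:ℝ)..1, F l := by rw [hlayer]
  _ ≤ K * (a * M' + (c * (4*(s+R^2)) ^ ((n:ℝ)/2) * I + K3)) :=
        mul_le_mul_of_nonneg_left key hK0
  _ = K * a * M' + K * (c * (4*(s+R^2)) ^ ((n:ℝ)/2) * I) + K * K3 := by ring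
  _ ≤ (4*Real.pi)^(-(n:ℝ)/2) * ((n:ℝ)^n * 2^n / R₀^n) * Mtot
      + c * Real.pi^(-(n:ℝ)/2) * I
      + (4*Real.pi)^(-(n:ℝ)/2) * (4^n * (omegaN n * (Q+1))) :=
        add_le_add (add_le_add hKaM (le_of_eq hmid)) hK3b
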